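/- arXiv:2305.05037 — 2 statements merged into one kernel-verified Lean document; each statement's English description precedes it below -/
import Mathlib

section
/- The isometry group of the rank-3 lattice with Gram matrix [[6,3,0],[3,6,0],[0,0,6]] has order 24 and contains no element of order 4. -/
open Matrix

/-- The Gram matrix of the invariant lattice `S^{G₀}(X)`. -/
def Gram : Matrix (Fin 3) (Fin 3) ℤ := !![6, 3, 0; 3, 6, 0; 0, 0, 6]

def isoList : List (Matrix (Fin 3) (Fin 3) ℤ) :=
  [!![-1, -1, 0; 0, 1, 0; 0, 0, -1],
   !![-1, -1, 0; 0, 1, 0; 0, 0, 1],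
   !![-1, -1, 0; 1, 0, 0; 0, 0, -1],
   !![-1, -1, 0; 1, 0, 0; 0, 0, 1],
   !![-1, 0, 0; 0, -1, 0; 0, 0, -1],
   !![-1, 0, 0; 0, -1, 0; 0, 0, 1],
   !![-1, 0, 0; 1, 1, 0; 0, 0, -1],
   !![-1, 0, 0; 1, 1, 0; 0, 0, 1],
   !![0, -1, 0; -1, 0, 0; 0, 0, -1],
   !![0, -1, 0; -1, 0, 0; 0, 0, 1],
   !![0, -1, 0; 1, 1, 0; 0, 0, -1],
   !![0, -1, 0; 1, 1, 0; 0, 0, 1],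
   !![0, 1, 0; -1, -1, 0; 0, 0, -1],
   !![0, 1, 0; -1, -1, 0; 0, 0, 1],
   !![0, 1, 0; 1, 0, 0; 0, 0, -1],
   !![0, 1, 0; 1, 0, 0; 0, 0, 1],
   !![1, 0, 0; -1, -1, 0; 0, 0, -1],
   !![1, 0, 0; -1, -1, 0; 0, 0, 1],
   !![1, 0, 0; 0, 1, 0; 0, 0, -1],
   !![1, 0, 0; 0, 1, 0; 0, 0, 1],
   !![1, 1, 0; -1, 0, 0; 0, 0, -1],
   !![1, 1, 0; -1, 0, 0; 0, 0, 1],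
   !![1, 1, 0; 0, -1, 0; 0, 0, -1],
   !![1, 1, 0; 0, -1, 0; 0, 0, 1]]

lemma colcases (x y z : ℤ) (h : x*x + x*y + y*y + z*z = 1) :
    (x=1∧y=0∧z=0)∨(x=0∧y=1∧z=0)∨(x=-1∧y=1∧z=0)∨(x=-1∧y=0∧z=0)∨
    (x=0∧y=-1∧z=0)∨(x=1∧y=-1∧z=0)∨(x=0∧y=0∧z=1)∨(x=0∧y=0∧z=-1) := by
  have hx1 : -1 ≤ x := by nlinarith [sq_nonneg (x+2*y), sq_nonneg z, sq_nonneg (x+1)]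
  have hx2 : x ≤ 1 := by nlinarith [sq_nonneg (x+2*y), sq_nonneg z, sq_nonneg (x-1)]
  have hy1 : -1 ≤ y := by nlinarith [sq_nonneg (y+2*x), sq_nonneg z, sq_nonneg (y+1)]
  have hy2 : y ≤ 1 := by nlinarith [sq_nonneg (y+2*x), sq_nonneg z, sq_nonneg (y-1)]
  have hz1 : -1 ≤ z := by nlinarith [sq_nonneg (x+y), sq_nonneg x, sq_nonneg y, sq_nonneg (z+1)]
  have hz2 : z ≤ 1 := by nlinarith [sq_nonneg (x+y), sq_nonneg x, sq_nonneg y, sq_nonneg (z-1)]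
  interval_cases x <;> interval_cases y <;> interval_cases z <;> omega

lemma key (M : Matrix (Fin 3) (Fin 3) ℤ) : Mᵀ * Gram * M = Gram ↔ M ∈ isoList := by
  constructor
  · intro hM
    obtain ⟨a, b, c, d, e, f, g, h, k, rfl⟩ :
        ∃ a b c d e f g h k, M = !![a, b, c; d, e, f; g, h, k] :=
      ⟨_, _, _, _, _, _, _, _, _, Matrix.eta_fin_three M⟩
    have eq : ∀ p q : Fin 3, (!![a, b, c; d, e, f; g, h, k]ᵀ * Gram * !![a, b, c; d, e, f; g, h, k]) p q = Gram p q :=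
      fun p q => by rw [hM]
    have e00 := eq 0 0; have e11 := eq 1 1; have e22 := eq 2 2
    have e01 := eq 0 1; have e02 := eq 0 2; have e12 := eq 1 2
    simp [Gram, Matrix.mul_apply, Fin.sum_univ_three, Matrix.vecHead, Matrix.vecTail,
      Matrix.transpose_apply] at e00 e11 e22 e01 e02 e12
    have h1 : a*a + a*d + d*d + g*g = 1 :=
      mul_left_cancel₀ (by norm_num : (6:ℤ) ≠ 0) (by linear_combination e00)
    have h2 : b*b + b*e + e*e + h*h = 1 :=
      mul_left_cancel₀ (by norm_num : (6:ℤ) ≠ 0) (by linear_combination e11)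
    have h3 : c*c + c*f + f*f + k*k = 1 :=
      mul_left_cancel₀ (by norm_num : (6:ℤ) ≠ 0) (by linear_combination e22)
    rcases colcases a d g h1 with
      ⟨rfl,rfl,rfl⟩|⟨rfl,rfl,rfl⟩|⟨rfl,rfl,rfl⟩|⟨rfl,rfl,rfl⟩|⟨rfl,rfl,rfl⟩|⟨rfl,rfl,rfl⟩|⟨rfl,rfl,rfl⟩|⟨rfl,rfl,rfl⟩ <;>
    rcases colcases b e h h2 with
      ⟨rfl,rfl,rfl⟩|⟨rfl,rfl,rfl⟩|⟨rfl,rfl,rfl⟩|⟨rfl,rfl,rfl⟩|⟨rfl,rfl,rfl⟩|⟨rfl,rfl,rfl⟩|⟨rfl,rfl,rfl⟩|⟨rfl,rfl,rfl⟩ <;>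
    rcases colcases c f k h3 with
      ⟨rfl,rfl,rfl⟩|⟨rfl,rfl,rfl⟩|⟨rfl,rfl,rfl⟩|⟨rfl,rfl,rfl⟩|⟨rfl,rfl,rfl⟩|⟨rfl,rfl,rfl⟩|⟨rfl,rfl,rfl⟩|⟨rfl,rfl,rfl⟩ <;>
    revert e01 e02 e12 <;> decide
  · intro hM
    fin_cases hM <;> decide

theorem stmt_14 :
    Nat.card {M : Matrix (Fin 3) (Fin 3) ℤ // Mᵀ * Gram * M = Gram} = 24 ∧
    ¬ ∃ M : Matrix (Fin 3) (Fin 3) ℤ,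
        Mᵀ * Gram * M = Gram ∧ M ^ 4 = 1 ∧ M ^ 2 ≠ 1 := by
  constructor
  · have e : {M : Matrix (Fin 3) (Fin 3) ℤ // Mᵀ * Gram * M = Gram} ≃
        {M : Matrix (Fin 3) (Fin 3) ℤ // M ∈ isoList.toFinset} :=
      Equiv.subtypeEquivRight fun M => by rw [key, List.mem_toFinset]
    rw [Nat.card_congr e, Nat.card_eq_fintype_card, Fintype.card_coe]
    decide
  · rintro ⟨M, hG, hM4, hM2⟩
    have hmem := (key M).1 hG
    fin_cases hmem <;>
      first
        | exact hM2 (by decide)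
        | exact absurd hM4 (by decide)
end

section
/- Let M be an even lattice and T ⊆ M an even sublattice of finite index. Then the subgroup H = M/T of the discriminant group A_T = T∨/T is isotropic, i.e. the induced quadratic form q_T : A_T → ℚ/2ℤ vanishes on H. Conversely, for every isotropic subgroup H ⊆ A_T, the preimage π⁻¹(H) ⊆ T∨ under the quotient map π : T∨ → A_T is an even overlattice of T, and these two constructions are mutually inverse bijections between finite-index even overlattices of T and isotropic subgroups of A_T. -/
open LinearMap

/-- **Nikulin's correspondence between even overlattices and isotropic subgroups.**

Let `T` be an even nondegenerate lattice, realized as a full-rank `ℤ`-submodule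
of a finite-dimensional rational vector space `V` carrying a symmetric
nondegenerate bilinear form `B` which is integral and even on `T`.  Let
`D = T∨` be the dual lattice, `A_T = T∨/T` the discriminant group with quotient
map `π : T∨ → A_T`.  A subgroup `H ⊆ A_T` is isotropic iff the induced
quadratic form `q_T : A_T → ℚ/2ℤ` vanishes on `H`, i.e. iff `B x x ∈ 2ℤ` for
every `x ∈ π⁻¹(H)`.

Then there is a bijection `e` between finite-index even overlattices `M` of `T`
and isotropic subgroups `H ⊆ A_T`, where `e` sends `M` to `π(M ∩ T∨) = M/T`
and its inverse sends `H` to `π⁻¹(H)`; so the two constructions are mutually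
inverse. -/
theorem stmt_19 {V : Type*} [AddCommGroup V] [Module ℚ V] [FiniteDimensional ℚ V]
    (B : LinearMap.BilinForm ℚ V) (hsymm : B.IsSymm) (hnd : B.Nondegenerate)
    (T : Submodule ℤ V) (hspan : Submodule.span ℚ (T : Set V) = ⊤)
    (hint : ∀ v ∈ T, ∀ w ∈ T, ∃ m : ℤ, B v w = (m : ℚ))
    (heven : ∀ v ∈ T, ∃ m : ℤ, B v v = 2 * (m : ℚ))
    -- the dual lattice `T∨`
    (D : Submodule ℤ V) (hD : D = B.dualSubmodule T)
    -- the quotient map `π : T∨ → A_T = T∨/T`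
    (π : D →ₗ[ℤ] (D ⧸ T.comap D.subtype)) (hπ : π = (T.comap D.subtype).mkQ) :
    ∃ e : {M : Submodule ℤ V //
            -- `M` is a finite-index even overlattice of `T`:
            T ≤ M ∧ Finite (M ⧸ T.comap M.subtype) ∧
              (∀ v ∈ M, ∃ m : ℤ, B v v = 2 * (m : ℚ))} ≃
          {H : Submodule ℤ (D ⧸ T.comap D.subtype) //
            -- `H` is an isotropic subgroup of `A_T`:
            ∀ x : D, π x ∈ H → ∃ m : ℤ, B x x = 2 * (m : ℚ)},
      -- `e` sends `M` to the subgroup `M/T ⊆ A_T`: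
      (∀ M, ((e M : Submodule ℤ (D ⧸ T.comap D.subtype)) : Set _) =
          π '' {x : D | (x : V) ∈ (M : Submodule ℤ V)}) ∧
      -- the inverse of `e` sends `H` to `π⁻¹(H)`:
      (∀ H, ((e.symm H : Submodule ℤ V) : Set V) =
          Subtype.val '' (π ⁻¹' (H : Submodule ℤ (D ⧸ T.comap D.subtype)))) := by
  subst hD hπ
  -- `T` is contained in its dual lattice
  have hTD : T ≤ B.dualSubmodule T := by
    intro t ht y hy
    obtain ⟨m, hm⟩ := hint t ht y hy
    exact Submodule.mem_one.mpr ⟨m, by simpa using hm.symm⟩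
  -- any even overlattice of `T` is contained in the dual lattice
  have key_even_le : ∀ M : Submodule ℤ V, T ≤ M →
      (∀ v ∈ M, ∃ m : ℤ, B v v = 2 * (m : ℚ)) → M ≤ B.dualSubmodule T := by
    intro M hTM hMe v hv y hy
    obtain ⟨a, ha⟩ := hMe v hv
    obtain ⟨b, hb⟩ := hMe y (hTM hy)
    obtain ⟨c, hc⟩ := hMe (v + y) (M.add_mem hv (hTM hy))
    refine Submodule.mem_one.mpr ⟨c - a - b, ?_⟩
    have hs : B y v = B v y := (hsymm.eq y v)
    have hexp : B (v + y) (v + y) = B v v + B v y + (B y v + B y y) := by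
      simp only [map_add, LinearMap.add_apply]; ring
    have hgoal : ((c : ℚ) - a - b) = B v y := by
      rw [hexp, hs] at hc; linarith
    simpa using hgoal
  -- the discriminant group is finite
  have hfinD : Finite ((B.dualSubmodule T) ⧸ T.comap (B.dualSubmodule T).subtype) := by
    classical
    obtain ⟨s, hsT, hsp, hli⟩ := exists_linearIndependent ℚ (T : Set V)
    rw [hspan] at hsp
    let bV : Module.Basis s ℚ V := Module.Basis.mk hli (by rw [Subtype.range_coe, hsp])
    haveI : Fintype s := FiniteDimensional.fintypeBasisIndex bV
    have hbmem : ∀ i : s, (bV i : V) ∈ T := by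
      intro i; rw [Module.Basis.mk_apply]; exact hsT i.2
    -- dual lattice is contained in the span of the dual basis
    have hDle : B.dualSubmodule T ≤
        Submodule.span ℤ (Set.range (B.dualBasis hnd bV)) := by
      rw [← B.dualSubmodule_span_of_basis hnd bV]
      intro x hx y hy
      refine hx y ?_
      refine Submodule.span_le.mpr ?_ hy
      rintro _ ⟨i, rfl⟩; exact hbmem i
    haveI : Module.Finite ℤ
        (Submodule.span ℤ (Set.range (B.dualBasis hnd bV))) :=
      Module.Finite.span_of_finite ℤ (Set.finite_range _)
    haveI : IsNoetherian ℤ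
        (Submodule.span ℤ (Set.range (B.dualBasis hnd bV))) :=
      isNoetherian_of_fg_of_noetherian _
        (Module.Finite.iff_fg.mp inferInstance)
    have hfg : (B.dualSubmodule T).FG := by
      have h1 : ((B.dualSubmodule T).comap
          (Submodule.span ℤ (Set.range (B.dualBasis hnd bV))).subtype).FG :=
        IsNoetherian.noetherian _
      have h2 := Submodule.FG.map
        (Submodule.span ℤ (Set.range (B.dualBasis hnd bV))).subtype h1
      rwa [Submodule.map_comap_subtype, inf_eq_right.mpr hDle] at h2
    haveI : Module.Finite ℤ (B.dualSubmodule T) := Module.Finite.iff_fg.mpr hfg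
    haveI : Module.Finite ℤ
        ((B.dualSubmodule T) ⧸ T.comap (B.dualSubmodule T).subtype) :=
      Module.Finite.of_surjective _ (Submodule.mkQ_surjective _)
    refine Module.finite_of_fg_torsion _ ?_
    intro x
    obtain ⟨d, rfl⟩ := Submodule.mkQ_surjective _ x
    -- find a denominator-clearing integer for `d`
    obtain ⟨n, hn⟩ := IsLocalization.exist_integer_multiples (nonZeroDivisors ℤ)
      Finset.univ (fun i : s => bV.repr (d : V) i)
    refine ⟨n, ?_⟩
    have hmem : (n : ℤ) • (d : V) ∈ T := by
      have hrepr : (d : V) = ∑ i : s, bV.repr (d : V) i • bV i :=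
        (bV.sum_repr (d : V)).symm
      rw [hrepr, Finset.smul_sum]
      refine Submodule.sum_mem _ ?_
      intro i _
      obtain ⟨m, hm⟩ := hn i (Finset.mem_univ i)
      rw [← smul_assoc]
      have : (n : ℤ) • bV.repr (d : V) i = (m : ℚ) := by
        rw [← hm]; simp [zsmul_eq_mul]
      rw [this, Int.cast_smul_eq_zsmul]
      exact Submodule.smul_mem _ _ (hbmem i)
    have : (n : ℤ) • (T.comap (B.dualSubmodule T).subtype).mkQ d = 0 := by
      rw [← map_smul, Submodule.mkQ_apply, Submodule.Quotient.mk_eq_zero]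
      exact hmem
    simpa [Submonoid.smul_def] using this
  -- abbreviations
  set Dm := B.dualSubmodule T with hDm
  set T' := T.comap Dm.subtype with hT'
  -- the forward map
  have fwd_prop : ∀ M : {M : Submodule ℤ V // T ≤ M ∧ Finite (M ⧸ T.comap M.subtype) ∧
      (∀ v ∈ M, ∃ m : ℤ, B v v = 2 * (m : ℚ))},
      ∀ x : Dm, T'.mkQ x ∈ (M.1.comap Dm.subtype).map T'.mkQ →
        ∃ m : ℤ, B x x = 2 * (m : ℚ) := by
    rintro M x hx
    rw [Submodule.mem_map] at hx
    obtain ⟨y, hy, hxy⟩ := hx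
    simp only [Submodule.mkQ_apply] at hxy
    have hsub : y - x ∈ T' := (Submodule.Quotient.eq _).mp hxy
    have hxM : (x : V) ∈ M.1 := by
      have h1 : ((y : V) - (x : V)) ∈ M.1 := M.2.1 hsub
      have h2 : (y : V) ∈ M.1 := hy
      have := M.1.sub_mem h2 h1
      simpa using this
    exact M.2.2.2 _ hxM
  have bwd_even : ∀ H : Submodule ℤ (Dm ⧸ T'),
      (∀ x : Dm, T'.mkQ x ∈ H → ∃ m : ℤ, B x x = 2 * (m : ℚ)) →
      ∀ v ∈ (H.comap T'.mkQ).map Dm.subtype, ∃ m : ℤ, B v v = 2 * (m : ℚ) := by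
    intro H hH v hv
    obtain ⟨x, hx, rfl⟩ := Submodule.mem_map.mp hv
    exact hH x hx
  have bwd_le : ∀ H : Submodule ℤ (Dm ⧸ T'), T ≤ (H.comap T'.mkQ).map Dm.subtype := by
    intro H t ht
    refine Submodule.mem_map.mpr ⟨⟨t, hTD ht⟩, ?_, rfl⟩
    have : T'.mkQ ⟨t, hTD ht⟩ = 0 := by
      rw [Submodule.mkQ_apply, Submodule.Quotient.mk_eq_zero]
      exact ht
    show T'.mkQ _ ∈ H
    rw [this]; exact H.zero_mem
  have bwd_fin : ∀ H : Submodule ℤ (Dm ⧸ T'),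
      Finite (((H.comap T'.mkQ).map Dm.subtype) ⧸
        T.comap ((H.comap T'.mkQ).map Dm.subtype).subtype) := by
    intro H
    set N := (H.comap T'.mkQ).map Dm.subtype with hN
    have hND : N ≤ Dm := Submodule.map_subtype_le _ _
    have hle : T.comap N.subtype ≤ T'.comap (Submodule.inclusion hND) := by
      intro x hx; exact hx
    let φ := Submodule.mapQ (T.comap N.subtype) T' (Submodule.inclusion hND) hle
    have hinj : Function.Injective φ := by
      intro a b hab
      obtain ⟨x, rfl⟩ := Submodule.mkQ_surjective _ a
      obtain ⟨y, rfl⟩ := Submodule.mkQ_surjective _ b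
      simp only [φ, Submodule.mkQ_apply, Submodule.mapQ_apply] at hab
      rw [Submodule.Quotient.eq] at hab
      simp only [Submodule.mkQ_apply]
      rw [Submodule.Quotient.eq]
      simpa [hT'] using hab
    exact Finite.of_injective φ hinj
  refine ⟨⟨fun M => ⟨(M.1.comap Dm.subtype).map T'.mkQ, fwd_prop M⟩,
    fun H => ⟨(H.1.comap T'.mkQ).map Dm.subtype, bwd_le H.1, bwd_fin H.1,
      bwd_even H.1 H.2⟩, ?_, ?_⟩, ?_, ?_⟩
  · -- left inverse
    intro M
    apply Subtype.ext
    show ((((M.1.comap Dm.subtype).map T'.mkQ).comap T'.mkQ).map Dm.subtype) = M.1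
    rw [Submodule.comap_map_eq, Submodule.ker_mkQ]
    have h1 : T' ≤ M.1.comap Dm.subtype := fun x hx => M.2.1 hx
    rw [sup_eq_left.mpr h1, Submodule.map_comap_subtype,
      inf_eq_right.mpr (key_even_le M.1 M.2.1 M.2.2.2)]
  · -- right inverse
    intro H
    apply Subtype.ext
    show (((H.1.comap T'.mkQ).map Dm.subtype).comap Dm.subtype).map T'.mkQ = H.1
    rw [Submodule.comap_map_eq, Submodule.ker_subtype, sup_bot_eq,
      Submodule.map_comap_eq, Submodule.range_mkQ, top_inf_eq]
  · intro M
    rfl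
  · intro H
    rfl
end
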